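/- Let ζ = exp(2πi/7) ∈ ℂ. There exist natural numbers f₁, …, f₆ such that ζ + ζ² + ζ³ = 1 + ∑_{u=1}^{6} f_u · ζ^u/(1 − ζ^u). -/

import Mathlib

theorem eichler_solution_order_seven :
    ∃ f₁ f₂ f₃ f₄ f₅ f₆ : ℕ,
      letI ζ : ℂ := Complex.exp (2 * Real.pi * Complex.I / 7)
      (ζ + ζ ^ 2 + ζ ^ 3 : ℂ) =
        1 + (f₁ : ℂ) * (ζ / (1 - ζ)) + (f₂ : ℂ) * (ζ ^ 2 / (1 - ζ ^ 2))
          + (f₃ : ℂ) * (ζ ^ 3 / (1 - ζ ^ 3)) + (f₄ : ℂ) * (ζ ^ 4 / (1 - ζ ^ 4))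
          + (f₅ : ℂ) * (ζ ^ 5 / (1 - ζ ^ 5)) + (f₆ : ℂ) * (ζ ^ 6 / (1 - ζ ^ 6)) := by
  refine ⟨2, 0, 1, 0, 0, 0, ?_⟩
  set ζ : ℂ := Complex.exp (2 * Real.pi * Complex.I / 7) with hζ
  have hprim : IsPrimitiveRoot ζ 7 := by
    have := Complex.isPrimitiveRoot_exp 7 (by norm_num)
    rw [hζ]
    convert this using 2
    norm_num
  have h7 : ζ ^ 7 = 1 := hprim.pow_eq_one
  have h1 : (1 : ℂ) - ζ ≠ 0 := by
    rw [sub_ne_zero]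
    intro h
    have := hprim.pow_ne_one_of_pos_of_lt (show 1 ≠ 0 by norm_num) (show 1 < 7 by norm_num)
    simp [← h] at this
  have h3 : (1 : ℂ) - ζ ^ 3 ≠ 0 := by
    rw [sub_ne_zero]
    intro h
    have := hprim.pow_ne_one_of_pos_of_lt (show 3 ≠ 0 by norm_num) (show 3 < 7 by norm_num)
    exact this h.symm
  push_cast
  field_simp
  ring_nf
  linear_combination h7
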